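/- Let p be an odd prime, a ≥ 1 an integer, and ε ∈ {1, −1}. Then there exist a prime r and a positive integer m such that, setting q := r^m, the integer p^a divides q − ε and p^{a+1} does not divide q − ε. -/
import Mathlib

/-- Let `p` be an odd prime, `a ≥ 1` an integer and `ε ∈ {1, -1}`. Then there is
a prime `r` and a positive integer `m` such that, with `q := r ^ m`, one has
`p^a ∣ q - ε` and `p^(a+1) ∤ q - ε` (computed in the integers). -/
theorem exists_prime_power_with_exact_p_adic_condition
    (p : ℕ) (hp : p.Prime) (hodd : Odd p) (a : ℕ) (ha : 1 ≤ a)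
    (ε : ℤ) (hε : ε = 1 ∨ ε = -1) :
    ∃ (r m : ℕ), r.Prime ∧ 0 < m ∧
      (p : ℤ) ^ a ∣ (r : ℤ) ^ m - ε ∧ ¬ (p : ℤ) ^ (a + 1) ∣ (r : ℤ) ^ m - ε := by
  have hp1 : 1 < p := hp.one_lt
  have hNpos : 0 < p ^ (a + 1) := pow_pos hp.pos _
  haveI : NeZero (p ^ (a + 1)) := ⟨hNpos.ne'⟩
  -- target residue t = ε + p^a, as a natural number
  obtain ⟨t, ht : (t : ℤ) = ε + (p : ℤ) ^ a⟩ : ∃ t : ℕ, (t : ℤ) = ε + (p : ℤ) ^ a := by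
    rcases hε with rfl | rfl
    · exact ⟨1 + p ^ a, by push_cast; ring⟩
    · refine ⟨p ^ a - 1, ?_⟩
      have : 1 ≤ p ^ a := Nat.one_le_pow _ _ hp.pos
      push_cast [this]
      ring
  -- t is coprime to p
  have hpdvd : p ∣ p ^ a := dvd_pow_self p (by omega)
  have hcop : Nat.Coprime t (p ^ (a + 1)) := by
    apply Nat.Coprime.pow_right
    rw [Nat.coprime_comm, hp.coprime_iff_not_dvd]
    intro hdvd
    have : (p : ℤ) ∣ (t : ℤ) := Int.natCast_dvd_natCast.mpr hdvd
    rw [ht] at this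
    have h2 : (p : ℤ) ∣ (p : ℤ) ^ a := dvd_pow_self _ (by omega)
    have : (p : ℤ) ∣ ε := (dvd_add_right h2).mp (by rwa [add_comm] at this)
    rcases hε with rfl | rfl
    · exact hp.one_lt.ne' (by exact_mod_cast Int.eq_one_of_dvd_one (by positivity) this)
    · have := Int.le_of_dvd (by norm_num) ((dvd_neg).mpr this)
      omega
  have hunit : IsUnit ((t : ZMod (p ^ (a + 1)))) :=
    (ZMod.isUnit_iff_coprime t _).mpr hcop
  obtain ⟨r, -, hr, hrt⟩ := Nat.forall_exists_prime_gt_and_eq_mod hunit 0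
  refine ⟨r, 1, hr, one_pos, ?_, ?_⟩
  · have : ((p : ℤ) ^ (a + 1)) ∣ ((r : ℤ) - t) := by
      have : ((((r : ℤ) - t) : ℤ) : ZMod (p ^ (a + 1))) = 0 := by
        push_cast [hrt]; ring
      rwa [ZMod.intCast_zmod_eq_zero_iff_dvd, Nat.cast_pow] at this
    have hsub : (r : ℤ) ^ 1 - ε = ((r : ℤ) - t) + (p : ℤ) ^ a := by
      rw [ht]; ring
    rw [hsub]
    exact dvd_add (dvd_trans (pow_dvd_pow _ (by omega)) this) dvd_rfl
  · intro hdvd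
    have hdvd' : ((p : ℤ) ^ (a + 1)) ∣ ((r : ℤ) - t) := by
      have : ((((r : ℤ) - t) : ℤ) : ZMod (p ^ (a + 1))) = 0 := by
        push_cast [hrt]; ring
      rwa [ZMod.intCast_zmod_eq_zero_iff_dvd, Nat.cast_pow] at this
    have hsub : (p : ℤ) ^ a = ((r : ℤ) ^ 1 - ε) - ((r : ℤ) - t) := by
      rw [ht]; ring
    have : ((p : ℤ) ^ (a + 1)) ∣ (p : ℤ) ^ a := hsub ▸ dvd_sub hdvd hdvd'
    have h1 := Int.le_of_dvd (by positivity) this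
    have h2 : (p : ℤ) ^ a < (p : ℤ) ^ (a + 1) :=
      pow_lt_pow_right₀ (by exact_mod_cast hp1) (Nat.lt_succ_self a)
    linarith
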